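/- The reduction map Λ_r, defined on d × d complex matrices by Λ_r(X) = tr(X)·I_d − X, is a positive map (it maps positive semidefinite matrices to positive semidefinite matrices), but for d ≥ 2 it is not completely positive: the matrix (I_d ⊗ Λ_r)(P₊^{(d)}) = (1/d)·I_{d²} − P₊^{(d)} is not positive semidefinite. -/

import Mathlib

open scoped BigOperators ComplexOrder Matrix

/-- The blockwise extension `I_n ⊗ Λ`, defined by
`((I_n ⊗ Λ)(X))_{(i,μ),(j,ν)} = (Λ(X^{(i,j)}))_{μν}` where `X^{(i,j)}_{μν} = X_{(i,μ),(j,ν)}`. -/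
def extendMap {n d d' : ℕ}
    (Λ : Matrix (Fin d) (Fin d) ℂ →ₗ[ℂ] Matrix (Fin d') (Fin d') ℂ)
    (X : Matrix (Fin n × Fin d) (Fin n × Fin d) ℂ) :
    Matrix (Fin n × Fin d') (Fin n × Fin d') ℂ :=
  fun p q => Λ (Matrix.of fun μ ν => X (p.1, μ) (q.1, ν)) p.2 q.2

/-- The reduction map `Λ_r(X) = tr(X)·I_d − X`. -/
noncomputable def reductionMap (d : ℕ) :
    Matrix (Fin d) (Fin d) ℂ →ₗ[ℂ] Matrix (Fin d) (Fin d) ℂ where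
  toFun X := X.trace • (1 : Matrix (Fin d) (Fin d) ℂ) - X
  map_add' X Y := by
    simp only [Matrix.trace_add, add_smul]
    abel
  map_smul' c X := by
    simp [Matrix.trace_smul, smul_sub, smul_smul]

/-- The projector `P₊^{(d)}` onto the maximally entangled vector
`ψ₊ = (1/√d) ∑ i, e_i ⊗ e_i`, with entries `(P₊)_{(i,μ),(j,ν)} = (1/d)·δ_{iμ}·δ_{jν}`. -/
noncomputable def maxEntProj (d : ℕ) : Matrix (Fin d × Fin d) (Fin d × Fin d) ℂ :=
  fun p q => if p.1 = p.2 ∧ q.1 = q.2 then 1 / (d : ℂ) else 0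

/-- Row-wise Cauchy–Schwarz inequality. -/
lemma aux_rowCS {d : ℕ} (B : Matrix (Fin d) (Fin d) ℂ) (v : Fin d → ℂ) (i : Fin d) :
    Complex.normSq ((B *ᵥ v) i) ≤ (∑ j, Complex.normSq (B i j)) * ∑ j, Complex.normSq (v j) := by
  have h1 : ‖(B *ᵥ v) i‖ ≤ ∑ j, ‖B i j‖ * ‖v j‖ := by
    simpa [Matrix.mulVec, dotProduct] using
      (norm_sum_le Finset.univ fun j => B i j * v j).trans_eq (by simp [norm_mul])
  calc Complex.normSq ((B *ᵥ v) i) = ‖(B *ᵥ v) i‖ ^ 2 := by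
        rw [Complex.sq_norm]
    _ ≤ (∑ j, ‖B i j‖ * ‖v j‖) ^ 2 := by
        exact pow_le_pow_left₀ (norm_nonneg _) h1 2
    _ ≤ (∑ j, ‖B i j‖ ^ 2) * ∑ j, ‖v j‖ ^ 2 :=
        Finset.sum_mul_sq_le_sq_mul_sq _ _ _
    _ = (∑ j, Complex.normSq (B i j)) * ∑ j, Complex.normSq (v j) := by
        simp [Complex.sq_norm]

/-- The reduction map is positive. -/
lemma aux_part1 {d : ℕ} (X : Matrix (Fin d) (Fin d) ℂ) (hX : X.PosSemidef) :
    (X.trace • (1 : Matrix (Fin d) (Fin d) ℂ) - X).PosSemidef := by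
  obtain ⟨B, rfl⟩ : ∃ B : Matrix (Fin d) (Fin d) ℂ, X = Bᴴ * B := by
    classical
    open scoped MatrixOrder in
    exact CStarAlgebra.nonneg_iff_eq_star_mul_self.mp hX.nonneg
  have hherm : (Bᴴ * B).IsHermitian := (Matrix.posSemidef_conjTranspose_mul_self B).1
  have hT : (Bᴴ * B).trace = ((∑ j, ∑ i, Complex.normSq (B i j) : ℝ) : ℂ) := by
    push_cast
    simp [Matrix.trace, Matrix.diag, Matrix.mul_apply, Matrix.conjTranspose_apply,
      Complex.normSq_eq_conj_mul_self]
  have htr : star (Bᴴ * B).trace = (Bᴴ * B).trace := by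
    rw [hT]; exact Complex.conj_ofReal _
  refine Matrix.PosSemidef.of_dotProduct_mulVec_nonneg ?_ ?_
  · unfold Matrix.IsHermitian at *
    rw [Matrix.conjTranspose_sub, Matrix.conjTranspose_smul, Matrix.conjTranspose_one, hherm, htr]
  · intro v
    have hV : star v ⬝ᵥ v = ((∑ j, Complex.normSq (v j) : ℝ) : ℂ) := by
      push_cast
      simp [dotProduct, Complex.normSq_eq_conj_mul_self]
    have hS : star v ⬝ᵥ ((Bᴴ * B) *ᵥ v)
        = ((∑ i, Complex.normSq ((B *ᵥ v) i) : ℝ) : ℂ) := by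
      rw [← Matrix.mulVec_mulVec, Matrix.dotProduct_mulVec, ← Matrix.star_mulVec]
      push_cast
      simp [dotProduct, Complex.normSq_eq_conj_mul_self]
    rw [Matrix.sub_mulVec, dotProduct_sub, Matrix.smul_mulVec, Matrix.one_mulVec,
      dotProduct_smul, hS, hV, hT, smul_eq_mul, ← Complex.ofReal_mul,
      ← Complex.ofReal_sub]
    rw [Complex.zero_le_real]
    rw [sub_nonneg]
    calc ∑ i, Complex.normSq ((B *ᵥ v) i)
        ≤ ∑ i, (∑ j, Complex.normSq (B i j)) * ∑ j, Complex.normSq (v j) :=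
          Finset.sum_le_sum fun i _ => aux_rowCS B v i
      _ = (∑ j, ∑ i, Complex.normSq (B i j)) * ∑ j, Complex.normSq (v j) := by
          rw [← Finset.sum_mul, Finset.sum_comm]

/-- Entrywise computation of the extended reduction map on the maximally entangled projector. -/
lemma aux_part2 {d : ℕ} (i μ j ν : Fin d) :
    ((Matrix.of fun μ ν => maxEntProj d (i, μ) (j, ν)).trace •
        (1 : Matrix (Fin d) (Fin d) ℂ) -
      Matrix.of fun μ ν => maxEntProj d (i, μ) (j, ν)) μ ν =
    ((1 / (d : ℂ)) • (1 : Matrix (Fin d × Fin d) (Fin d × Fin d) ℂ)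
      - maxEntProj d) (i, μ) (j, ν) := by
  have htr : (Matrix.of fun μ ν => maxEntProj d (i, μ) (j, ν)).trace
      = if i = j then 1 / (d : ℂ) else 0 := by
    simp only [Matrix.trace, Matrix.diag, Matrix.of_apply, maxEntProj]
    by_cases h : i = j
    · subst h; simp
    · rw [if_neg h, Finset.sum_eq_zero]
      intro x _
      exact if_neg (fun hc => h (hc.1.trans hc.2.symm))
  simp only [Matrix.sub_apply, Matrix.smul_apply, Matrix.one_apply, smul_eq_mul, htr]
  simp only [maxEntProj, Matrix.of_apply, Prod.mk.injEq]
  by_cases h1 : i = j <;> by_cases h2 : μ = ν <;> simp_all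

/-- The matrix `(1/d)·I − P₊` is not positive semidefinite for `d ≥ 2`. -/
lemma aux_part3 {d : ℕ} (hd : 2 ≤ d)
    (h : ((1 / (d : ℂ)) • (1 : Matrix (Fin d × Fin d) (Fin d × Fin d) ℂ)
          - maxEntProj d).PosSemidef) : False := by
  have hd0 : (d : ℂ) ≠ 0 := Nat.cast_ne_zero.mpr (by omega)
  set w : Fin d × Fin d → ℂ := fun p => if p.1 = p.2 then 1 else 0 with hw
  have hww : star w ⬝ᵥ w = (d : ℂ) := by
    simp [dotProduct, hw, Fintype.sum_prod_type, apply_ite (starRingEnd ℂ),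
      ite_mul, mul_ite, Finset.sum_ite_eq]
  have hPw : maxEntProj d *ᵥ w = w := by
    funext p
    simp only [Matrix.mulVec, dotProduct, maxEntProj, hw, Fintype.sum_prod_type]
    by_cases hp : p.1 = p.2
    · simp only [hp, true_and, mul_ite, mul_one, mul_zero, ite_self, if_true]
      simp [Finset.sum_ite_eq, Finset.card_univ, div_eq_mul_inv, mul_comm, hd0]
    · simp [hp]
  have hq := h.dotProduct_mulVec_nonneg w
  rw [Matrix.sub_mulVec, Matrix.smul_mulVec, Matrix.one_mulVec, hPw,
    dotProduct_sub, dotProduct_smul, hww, smul_eq_mul,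
    one_div, inv_mul_cancel₀ hd0] at hq
  have h1 : (0 : ℝ) ≤ 1 - d := by
    rw [show (1 - (d : ℂ)) = ((1 - (d : ℝ) : ℝ) : ℂ) by push_cast; ring,
      Complex.zero_le_real] at hq
    exact hq
  have h2 : (2 : ℝ) ≤ (d : ℝ) := by exact_mod_cast hd
  linarith

/-- **The reduction map is positive but not completely positive.** `Λ_r(X) = tr(X)·I − X`
maps positive semidefinite matrices to positive semidefinite matrices, but for `d ≥ 2`
the matrix `(I_d ⊗ Λ_r)(P₊^{(d)}) = (1/d)·I_{d²} − P₊^{(d)}` is not positive semidefinite. -/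
theorem reductionMap_positive_not_completelyPositive (d : ℕ) (hd : 2 ≤ d) :
    (∀ X : Matrix (Fin d) (Fin d) ℂ, X.PosSemidef → (reductionMap d X).PosSemidef) ∧
    extendMap (n := d) (reductionMap d) (maxEntProj d) =
      (1 / (d : ℂ)) • (1 : Matrix (Fin d × Fin d) (Fin d × Fin d) ℂ) - maxEntProj d ∧
    ¬ (extendMap (n := d) (reductionMap d) (maxEntProj d)).PosSemidef := by
  have heq : extendMap (n := d) (reductionMap d) (maxEntProj d) =
      (1 / (d : ℂ)) • (1 : Matrix (Fin d × Fin d) (Fin d × Fin d) ℂ) - maxEntProj d := by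
    funext p q
    obtain ⟨i, μ⟩ := p
    obtain ⟨j, ν⟩ := q
    exact aux_part2 i μ j ν
  refine ⟨fun X hX => aux_part1 X hX, heq, fun h => aux_part3 hd (heq ▸ h)⟩
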